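/- arXiv:1202.5785 — 4 statements merged into one kernel-verified Lean document; each statement's English description precedes it below -/
import Mathlib

section
/- If α is a Pisot number, then the distance from αⁿ to the nearest integer tends to 0 exponentially fast as n → ∞; more precisely, there exist constants C > 0 and 0 < θ < 1 such that ‖αⁿ‖ ≤ C·θⁿ for all n ≥ 1, where ‖x‖ denotes the distance from x to the nearest integer. -/
open IntermediateField Polynomial Finset


set_option maxHeartbeats 1000000 in
/-- For a Pisot number `α`, the distance from `αⁿ` to the nearest integer decays
exponentially: there are `C > 0` and `0 < θ < 1` with `‖αⁿ‖ ≤ C·θⁿ` for all `n ≥ 1`. -/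
theorem stmt_3 (α : ℝ) (hint : IsIntegral ℤ α) (hα : 1 < α)
    (hsmall : ∀ z ∈ ((minpoly ℚ α).map (algebraMap ℚ ℂ)).roots,
      z ≠ (α : ℂ) → ‖z‖ < 1) :
    ∃ C : ℝ, 0 < C ∧ ∃ θ : ℝ, 0 < θ ∧ θ < 1 ∧ ∀ n : ℕ, 1 ≤ n →
      |α ^ n - round (α ^ n)| ≤ C * θ ^ n := by
  classical
  have hQ : IsIntegral ℚ α := hint.tower_top
  haveI : FiniteDimensional ℚ ℚ⟮α⟯ := adjoin.finiteDimensional hQ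
  set g : ℚ⟮α⟯ := AdjoinSimple.gen ℚ α with hg
  let ι : ℚ⟮α⟯ →ₐ[ℚ] ℂ := (Complex.ofRealAm.restrictScalars ℚ).comp (ℚ⟮α⟯.val.restrictScalars ℚ)
  have hι : ι g = (α : ℂ) := rfl
  have hroot : ∀ σ : ℚ⟮α⟯ →ₐ[ℚ] ℂ, σ g ∈ ((minpoly ℚ α).map (algebraMap ℚ ℂ)).roots := by
    intro σ
    rw [mem_roots']
    refine ⟨(Polynomial.map_ne_zero_iff (algebraMap ℚ ℂ).injective).mpr (minpoly.ne_zero hQ), ?_⟩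
    · have h0 : Polynomial.aeval (σ g) (minpoly ℚ α) = 0 := by
        rw [Polynomial.aeval_algHom_apply, ← minpoly_gen ℚ α, ← hg]
        exact (congrArg σ (minpoly.aeval ℚ g)).trans (map_zero σ)
      rwa [IsRoot.def, Polynomial.eval_map, ← Polynomial.aeval_def]
  have hne : ∀ σ : ℚ⟮α⟯ →ₐ[ℚ] ℂ, σ ≠ ι → σ g ≠ (α : ℂ) := by
    intro σ hσ h
    apply hσ
    refine algHom_ext_of_eq_adjoin (F := ℚ) (K := ℂ) rfl fun x hx => ?_
    obtain rfl : x = α := hx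
    exact h.trans hι.symm
  -- the set of other embeddings
  set S : Finset (ℚ⟮α⟯ →ₐ[ℚ] ℂ) := Finset.univ.erase ι with hS
  -- θ
  set T : Finset ℝ := insert (1/2 : ℝ) (S.image fun σ => ‖σ g‖) with hT
  have hTne : T.Nonempty := ⟨1/2, Finset.mem_insert_self _ _⟩
  set θ : ℝ := T.max' hTne with hθ
  have hθhalf : (1/2 : ℝ) ≤ θ := Finset.le_max' _ _ (Finset.mem_insert_self _ _)
  have hθpos : 0 < θ := lt_of_lt_of_le (by norm_num) hθhalf
  have hθlt : θ < 1 := by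
    rw [hθ]
    apply Finset.max'_lt_iff _ hTne |>.mpr
    intro y hy
    rcases Finset.mem_insert.mp hy with h | h
    · rw [h]; norm_num
    · obtain ⟨σ, hσS, rfl⟩ := Finset.mem_image.mp h
      exact hsmall _ (hroot σ) (hne σ (Finset.ne_of_mem_erase hσS))
  have hθle : ∀ σ ∈ S, ‖σ g‖ ≤ θ := by
    intro σ hσ
    exact Finset.le_max' T _ (Finset.mem_insert_of_mem (Finset.mem_image_of_mem _ hσ))
  have hCpos : (0:ℝ) < (S.card : ℝ) + 1 := by
    have : (0:ℝ) ≤ (S.card : ℝ) := Nat.cast_nonneg _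
    linarith
  refine ⟨(S.card : ℝ) + 1, hCpos, θ, hθpos, hθlt, fun n hn => ?_⟩
  -- trace is an integer
  have hg_int : IsIntegral ℤ g := by
    apply (isIntegral_algebraMap_iff (algebraMap ℚ⟮α⟯ ℝ).injective).mp
    rw [show algebraMap ℚ⟮α⟯ ℝ g = α from rfl]
    exact hint
  obtain ⟨m, hm⟩ := IsIntegrallyClosed.isIntegral_iff.mp
    (Algebra.isIntegral_trace (R := ℤ) (L := ℚ) (hg_int.pow n))
  have hm' : ((m : ℚ)) = Algebra.trace ℚ ℚ⟮α⟯ (g ^ n) := by exact_mod_cast hm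
  have key : algebraMap ℚ ℂ (Algebra.trace ℚ ℚ⟮α⟯ (g ^ n)) = ∑ σ : ℚ⟮α⟯ →ₐ[ℚ] ℂ, σ (g ^ n) :=
    trace_eq_sum_embeddings ℂ
  have hsplit : ((m : ℚ) : ℂ) = (α : ℂ) ^ n + ∑ σ ∈ S, (σ g) ^ n := by
    have heq := (Finset.add_sum_erase Finset.univ (fun σ : ℚ⟮α⟯ →ₐ[ℚ] ℂ => σ (g ^ n))
      (Finset.mem_univ ι)).symm
    rw [show ((m : ℚ) : ℂ) = algebraMap ℚ ℂ ((m : ℚ)) from rfl, hm', key, heq, map_pow, hι]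
    congr 1
    exact Finset.sum_congr rfl fun σ _ => by rw [map_pow]
  have h1 : ((α ^ n - (m : ℝ) : ℝ) : ℂ) = -∑ σ ∈ S, (σ g) ^ n := by
    push_cast at hsplit ⊢
    linear_combination -hsplit
  have habs : |α ^ n - (m : ℝ)| ≤ (S.card : ℝ) * θ ^ n := by
    calc |α ^ n - (m : ℝ)| = ‖((α ^ n - (m : ℝ) : ℝ) : ℂ)‖ := by
          rw [Complex.norm_real, Real.norm_eq_abs]
      _ = ‖∑ σ ∈ S, (σ g) ^ n‖ := by rw [h1, norm_neg]
      _ ≤ ∑ σ ∈ S, ‖(σ g) ^ n‖ := norm_sum_le _ _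
      _ ≤ ∑ _σ ∈ S, θ ^ n := Finset.sum_le_sum fun σ hσ => by
          rw [norm_pow]
          exact pow_le_pow_left₀ (norm_nonneg _) (hθle σ hσ) n
      _ = (S.card : ℝ) * θ ^ n := by rw [Finset.sum_const, nsmul_eq_mul]
  calc |α ^ n - round (α ^ n)| ≤ |α ^ n - (m : ℝ)| := by
        have := round_le (α ^ n) m
        simpa using this
    _ ≤ (S.card : ℝ) * θ ^ n := habs
    _ ≤ ((S.card : ℝ) + 1) * θ ^ n := by
        have : (0:ℝ) ≤ θ ^ n := le_of_lt (pow_pos hθpos n)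
        nlinarith
end

section
/- Every totally real number field F of degree at least 2 over ℚ contains a Pisot number that generates F over ℚ. -/
open scoped NNReal ENNReal
open NumberField NumberField.InfinitePlace NumberField.mixedEmbedding

set_option maxHeartbeats 1000000

/-- Every totally real number field of degree at least 2 contains a Pisot number
generating it over `ℚ`. -/
theorem stmt_6 (F : Type*) [Field F] [NumberField F]
    (htr : ∀ φ : F →+* ℂ, ∀ x : F, (φ x).im = 0)
    (hdeg : 2 ≤ Module.finrank ℚ F)
    (ι : F →+* ℝ) :
    ∃ α : F, IsIntegral ℤ α ∧ 1 < ι α ∧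
      (∀ φ : F →+* ℂ, φ α ≠ ((ι α : ℝ) : ℂ) → ‖φ α‖ < 1) ∧
      IntermediateField.adjoin ℚ {α} = ⊤ := by
  classical
  set ιℂ : F →+* ℂ := Complex.ofRealHom.comp ι with hιℂ
  have hreal : ∀ φ : F →+* ℂ, ComplexEmbedding.IsReal φ := by
    intro φ
    rw [ComplexEmbedding.isReal_iff]
    ext x
    exact Complex.conj_eq_iff_im.mpr (htr φ x)
  have hallreal : ∀ w : InfinitePlace F, w.IsReal := fun w => by
    rw [← mk_embedding w, isReal_mk_iff]; exact hreal _
  have hmult : ∀ w : InfinitePlace F, mult w = 1 := fun w => by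
    rw [mult, if_pos (hallreal w)]
  set w₀ := InfinitePlace.mk ιℂ with hw₀
  -- choose a big enough bound B
  have hfac : (convexBodyLTFactor F : ℝ≥0∞) ≠ 0 := by
    simpa using convexBodyLTFactor_ne_zero F
  have hfin : minkowskiBound F ↑1 ≠ ⊤ := (minkowskiBound_lt_top F 1).ne
  obtain ⟨B, hB⟩ : ∃ B : ℝ≥0, minkowskiBound F ↑1 < convexBodyLTFactor F * B := by
    obtain ⟨C, hC, -⟩ := ENNReal.lt_iff_exists_nnreal_btwn.mp (minkowskiBound_lt_top F 1)
    refine ⟨(convexBodyLTFactor F)⁻¹ * C, ?_⟩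
    rw [← ENNReal.coe_mul, ← mul_assoc, mul_inv_cancel₀ (convexBodyLTFactor_ne_zero F), one_mul]
    exact hC

  obtain ⟨g, hg1, hg2⟩ := adjust_f F (f := fun _ => (1/2 : ℝ≥0)) (w₁ := w₀) B
    (fun w _ => by norm_num)
  have hvol : minkowskiBound F ↑1 < MeasureTheory.volume (convexBodyLT F g) := by
    rw [convexBodyLT_volume]
    refine hB.trans_le (le_of_eq ?_)
    congr 1
    rw [← hg2, ENNReal.coe_finset_prod]
  obtain ⟨a, ha0, ha⟩ := exists_ne_zero_mem_ringOfIntegers_lt F hvol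
  have ha' : ∀ w : InfinitePlace F, w ≠ w₀ → w (a : F) < 1/2 := by
    intro w hw
    have := ha w
    rw [hg1 w hw] at this
    simpa using this
  -- norm lower bound gives w₀ a > 1
  have hnorm : (1 : ℝ) ≤ |Algebra.norm ℚ (a : F)| := by
    rw [← Algebra.coe_norm_int, ← Int.cast_one, ← Int.cast_abs, Rat.cast_intCast, Int.cast_le]
    exact Int.one_le_abs (Algebra.norm_ne_zero_iff.mpr ha0)
  have hprod : w₀ (a : F) * ∏ w ∈ Finset.univ.erase w₀, w (a : F)
      = |Algebra.norm ℚ (a : F)| := by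
    rw [← prod_eq_abs_norm (↑a : F)]
    simp_rw [hmult, pow_one]
    exact Finset.mul_prod_erase Finset.univ (fun w : InfinitePlace F => w (↑a : F))
      (Finset.mem_univ w₀)
  have hcard : 2 ≤ Fintype.card (InfinitePlace F) := by
    have h := sum_mult_eq (K := F)
    rw [Finset.sum_congr rfl fun w _ => hmult w, Finset.sum_const, smul_eq_mul, mul_one,
      Finset.card_univ] at h
    rw [h]; exact hdeg
  have hne : (Finset.univ.erase w₀).Nonempty := by
    rw [← Finset.card_pos, Finset.card_erase_of_mem (Finset.mem_univ w₀), Finset.card_univ]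
    omega
  have hP1 : ∏ w ∈ Finset.univ.erase w₀, w (a : F) < 1 := by
    have := Finset.prod_lt_prod_of_nonempty (f := fun w : InfinitePlace F => w (a : F))
      (g := fun _ => (1 : ℝ))
      (fun w _ => pos_iff.mpr (by exact_mod_cast ha0)) (fun w hw => by
        have h2 := ha' w (Finset.ne_of_mem_erase hw)
        show w (↑a : F) < 1; linarith) hne
    simpa using this
  have hP0 : 0 < ∏ w ∈ Finset.univ.erase w₀, w (a : F) :=
    Finset.prod_pos fun w _ => pos_iff.mpr (by exact_mod_cast ha0)
  have hw₀a : 1 < w₀ (a : F) := by nlinarith [hprod ▸ hnorm]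
  -- the Pisot number
  refine ⟨(a : F)^2, (RingOfIntegers.isIntegral_coe a).pow 2, ?_, ?_, ?_⟩
  · have h1 : w₀ (a : F) = |ι (a : F)| := by
      rw [hw₀, apply]; simp [hιℂ]
    rw [map_pow]
    calc (1:ℝ) = 1^2 := by ring
    _ < (w₀ (a:F))^2 := by nlinarith
    _ = (ι (a:F))^2 := by rw [h1, sq_abs]
  · intro φ hφ
    have hφne : InfinitePlace.mk φ ≠ w₀ := by
      intro h
      rcases mk_eq_iff.mp h with h' | h'
      · exact hφ (by rw [h']; simp [hιℂ, map_pow])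
      · rw [ComplexEmbedding.isReal_iff.mp (hreal φ)] at h'
        exact hφ (by rw [h']; simp [hιℂ, map_pow])
    have := ha' _ hφne
    rw [apply] at this
    rw [map_pow, norm_pow]
    nlinarith [norm_nonneg (φ (a:F))]
  · have e : (((a^2 : 𝓞 F) : F)) = ((a:F))^2 := by push_cast; ring
    have h := NumberField.is_primitive_element_of_infinitePlace_lt (K := F) (x := a^2)
      (w := w₀) (pow_ne_zero 2 ha0) (fun w hw => by
        have h2 := ha' w hw
        have h0 : 0 ≤ w (a : F) := AbsoluteValue.nonneg _ _
        have h3 : w (((a^2 : 𝓞 F) : F)) = (w ((a:F)))^2 := by rw [e, map_pow]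
        rw [h3]; nlinarith) (Or.inl (hallreal w₀))
    rw [e] at h
    exact h
end

section
/- Let f ∈ ℤ[x] be the minimal polynomial of a Pisot number α of degree d, and let C(f) be its companion matrix. For all sufficiently large n (specifically n > log_{|α₂|}(1/(2(d-1))) where |α₂| is the largest modulus among conjugates of α other than α), the trace of C(f)ⁿ equals the nearest integer to αⁿ. -/
open Polynomial Matrix

/-- The companion matrix of a monic polynomial `f = x^d + c_{d-1}x^{d-1} + ⋯ + c_0`. -/
def companion {K : Type*} [CommRing K] (d : ℕ) (f : Polynomial K) :
    Matrix (Fin d) (Fin d) K := fun i j =>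
  if (i : ℕ) = (j : ℕ) + 1 then 1
  else if (j : ℕ) = d - 1 then -f.coeff i else 0

lemma eval_sum_fin (d : ℕ) (g : Polynomial ℂ) (hm : g.Monic) (hdeg : g.natDegree = d)
    (x : ℂ) (hx : g.eval x = 0) : ∑ k : Fin d, g.coeff k * x ^ (k : ℕ) = -x ^ d := by
  have h := Polynomial.eval_eq_sum_range (p := g) (x := x)
  rw [hx, hdeg, Finset.sum_range_succ] at h
  have hc : g.coeff d = 1 := by rw [← hdeg]; exact hm.coeff_natDegree
  rw [hc, one_mul] at h
  rw [Fin.sum_univ_eq_sum_range (fun k => g.coeff k * x ^ k)]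
  linear_combination -h

lemma vandermonde_companion (d : ℕ) (g : Polynomial ℂ) (hm : g.Monic) (hdeg : g.natDegree = d)
    (v : Fin d → ℂ) (hv : ∀ i, g.eval (v i) = 0) :
    Matrix.vandermonde v * companion d g = Matrix.diagonal v * Matrix.vandermonde v := by
  ext i j
  rw [Matrix.mul_apply, Matrix.diagonal_mul]
  simp only [Matrix.vandermonde, companion, Matrix.of_apply, mul_ite, mul_one, mul_zero,
    mul_neg]
  rcases eq_or_ne (j : ℕ) (d - 1) with hj | hj
  · have hnone : ∀ k : Fin d, ¬ ((k : ℕ) = (j : ℕ) + 1) := by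
      intro k hk; have := k.isLt; omega
    rw [Finset.sum_congr rfl (fun k _ => by rw [if_neg (hnone k), if_pos hj])]
    have h := eval_sum_fin d g hm hdeg (v i) (hv i)
    have hjd : (j : ℕ) + 1 = d := by have := j.isLt; omega
    calc ∑ k : Fin d, -(v i ^ (k : ℕ) * g.coeff k)
        = -∑ k : Fin d, g.coeff k * v i ^ (k : ℕ) := by
          rw [← Finset.sum_neg_distrib]; exact Finset.sum_congr rfl fun k _ => by ring
      _ = v i * v i ^ (j : ℕ) := by rw [h, neg_neg, ← pow_succ', hjd]
  · have hjd : (j : ℕ) + 1 < d := by have := j.isLt; omega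
    rw [Finset.sum_eq_single (⟨(j : ℕ) + 1, hjd⟩ : Fin d)]
    · rw [if_pos rfl]; ring
    · intro k _ hk
      rw [if_neg (by simpa [Fin.ext_iff] using hk), if_neg hj]
    · intro h; exact absurd (Finset.mem_univ _) h

lemma trace_companion_pow (d n : ℕ) (g : Polynomial ℂ) (hm : g.Monic) (hdeg : g.natDegree = d)
    (v : Fin d → ℂ) (hv : ∀ i, g.eval (v i) = 0) (hinj : Function.Injective v) :
    Matrix.trace ((companion d g) ^ n) = ∑ i, v i ^ n := by
  have hdet : IsUnit (Matrix.vandermonde v).det :=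
    isUnit_iff_ne_zero.2 (Matrix.det_vandermonde_ne_zero_iff.2 hinj)
  obtain ⟨u, hu⟩ := (Matrix.isUnit_iff_isUnit_det _).2 hdet
  have hvc := vandermonde_companion d g hm hdeg v hv
  have hconj : (u : Matrix (Fin d) (Fin d) ℂ) * companion d g *
      (↑(u⁻¹) : Matrix (Fin d) (Fin d) ℂ) = Matrix.diagonal v := by
    rw [hu, hvc, Matrix.mul_assoc, ← hu, u.mul_inv, Matrix.mul_one]
  have hpow : (u : Matrix (Fin d) (Fin d) ℂ) * (companion d g) ^ n *
      (↑(u⁻¹) : Matrix (Fin d) (Fin d) ℂ) = Matrix.diagonal (fun i => v i ^ n) := by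
    rw [← Units.conj_pow, hconj, Matrix.diagonal_pow]; rfl
  calc Matrix.trace ((companion d g) ^ n)
      = Matrix.trace ((u : Matrix (Fin d) (Fin d) ℂ) * (companion d g) ^ n *
        (↑(u⁻¹) : Matrix (Fin d) (Fin d) ℂ)) := (Matrix.trace_units_conj u _).symm
    _ = ∑ i, v i ^ n := by rw [hpow, Matrix.trace_diagonal]

lemma companion_map (d : ℕ) (f : Polynomial ℤ) :
    (companion d f).map ⇑(Int.castRingHom ℂ) = companion d (f.map (Int.castRingHom ℂ)) := by
  ext i j
  simp [companion, Matrix.map_apply, Polynomial.coeff_map, apply_ite (Int.cast : ℤ → ℂ)]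

lemma abs_multiset_sum (s : Multiset ℂ) :
    ‖s.sum‖ ≤ (s.map (‖·‖)).sum := by
  induction s using Multiset.induction with
  | empty => simp
  | cons a s ih =>
    simp only [Multiset.sum_cons, Multiset.map_cons]
    exact le_trans (norm_add_le _ _) (by gcongr)

lemma round_eq_of_abs_sub_lt {x : ℝ} {m : ℤ} (h : |x - m| < 1/2) : round x = m := by
  rw [round_eq, Int.floor_eq_iff]
  rw [abs_lt] at h
  constructor <;> [linarith; linarith]

/-- For a Pisot number `α` with minimal polynomial `f ∈ ℤ[x]` of degree `d`, and
`n > log_{|α₂|}(1/(2(d-1)))`, the trace of `C(f)ⁿ` equals the nearest integer to `αⁿ`. -/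
theorem stmt_8 (α : ℝ) (hint : IsIntegral ℤ α) (hα : 1 < α)
    (f : Polynomial ℤ) (hf : f = minpoly ℤ α)
    (d : ℕ) (hd : d = f.natDegree) (hd2 : 2 ≤ d)
    (R : Multiset ℂ) (hR : R = (f.map (Int.castRingHom ℂ)).roots)
    (hsmall : ∀ z ∈ R, z ≠ (α : ℂ) → ‖z‖ < 1)
    (α₂ : ℂ) (hα₂ : α₂ ∈ R) (hα₂ne : α₂ ≠ (α : ℂ))
    (hmax : ∀ z ∈ R, z ≠ (α : ℂ) → ‖z‖ ≤ ‖α₂‖)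
    (n : ℕ)
    (hn : Real.logb ‖α₂‖ (1 / (2 * ((d : ℝ) - 1))) < n) :
    Matrix.trace ((companion d f) ^ n) = round (α ^ n) := by
  have hmf : f.Monic := hf ▸ minpoly.monic hint
  set φ := Int.castRingHom ℂ with hφ
  set g := f.map φ with hg
  have hgm : g.Monic := hmf.map φ
  have hgdeg : g.natDegree = d := by rw [hmf.natDegree_map, hd]
  have hgne : g ≠ 0 := hgm.ne_zero
  -- separability and nodup roots
  have hintQ : IsIntegral ℚ α := hint.tower_top
  have hQ : minpoly ℚ α = f.map (algebraMap ℤ ℚ) := by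
    rw [hf]; exact minpoly.isIntegrallyClosed_eq_field_fractions' ℚ hint
  have hsep : (minpoly ℚ α).Separable := (minpoly.irreducible hintQ).separable
  have hgsep : g.Separable := by
    rw [hQ] at hsep
    have h2 : ((f.map (algebraMap ℤ ℚ)).map (algebraMap ℚ ℂ)).Separable := hsep.map
    rwa [Polynomial.map_map,
      (Subsingleton.elim ((algebraMap ℚ ℂ).comp (algebraMap ℤ ℚ)) φ)] at h2
  have hnodup : R.Nodup := hR ▸ Polynomial.nodup_roots hgsep
  have hcard : Multiset.card R = d := by
    rw [hR, Polynomial.splits_iff_card_roots.1 (IsAlgClosed.splits g), hgdeg]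
  -- α is a root
  have hgα : g.eval ((α : ℝ) : ℂ) = 0 := by
    have h0 : Polynomial.aeval α f = 0 := by rw [hf]; exact minpoly.aeval ℤ α
    have h1 : Polynomial.aeval ((algebraMap ℝ ℂ) α) f = algebraMap ℝ ℂ (Polynomial.aeval α f) :=
      Polynomial.aeval_algebraMap_apply ℂ α f
    rw [h0, map_zero] at h1
    rw [Polynomial.eval_map]
    exact h1
  have hαR : ((α : ℝ) : ℂ) ∈ R := by
    rw [hR, Polynomial.mem_roots']; exact ⟨hgne, hgα⟩
  -- trace over ℂ
  set l := R.toList with hl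
  have hlen : l.length = d := by rw [hl, Multiset.length_toList, hcard]
  have hlnodup : l.Nodup := by rw [hl, ← Multiset.coe_nodup, Multiset.coe_toList]; exact hnodup
  set v : Fin d → ℂ := fun i => l.get (Fin.cast hlen.symm i) with hv
  have hvmem : ∀ i, v i ∈ R := by
    intro i
    rw [← Multiset.mem_toList]
    exact l.get_mem _
  have hvroot : ∀ i, g.eval (v i) = 0 := by
    intro i
    have := hvmem i
    rw [hR, Polynomial.mem_roots'] at this
    exact this.2
  have hvinj : Function.Injective v := by
    intro a b hab
    have := (List.nodup_iff_injective_get.1 hlnodup) hab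
    simpa [Fin.ext_iff] using this
  have htr := trace_companion_pow d n g hgm hgdeg v hvroot hvinj
  have hsum : ∑ i, v i ^ n = (R.map (· ^ n)).sum := by
    have h1 : ∑ i : Fin d, v i ^ n = ∑ j : Fin l.length, (l.get j) ^ n :=
      Fintype.sum_equiv (finCongr hlen.symm) _ _ (fun i => rfl)
    have h2 : ∑ j : Fin l.length, (l.get j) ^ n = (l.map (· ^ n)).sum := by
      rw [← List.sum_ofFn]
      congr 1
      simp only [List.get_eq_getElem]
      exact List.ofFn_getElem_eq_map l (· ^ n)
    have h3 : (R.map (· ^ n)).sum = (l.map (· ^ n)).sum := by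
      conv_lhs => rw [← Multiset.coe_toList R]
      rw [Multiset.map_coe, Multiset.sum_coe]
    rw [h1, h2, h3]
  -- cast the integer trace
  set m : ℤ := Matrix.trace ((companion d f) ^ n) with hm
  have hcast : ((m : ℤ) : ℂ) = (R.map (· ^ n)).sum := by
    have h1 : ((companion d f) ^ n).map ⇑φ = (companion d g) ^ n := by
      have := map_pow φ.mapMatrix (companion d f) n
      simp only [RingHom.mapMatrix_apply] at this
      rw [this, hg, ← companion_map d f]
    have h2 : ((m : ℤ) : ℂ) = Matrix.trace (((companion d f) ^ n).map ⇑φ) := by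
      simp only [hm, Matrix.trace, Matrix.diag, Matrix.map_apply]
      push_cast
      rfl
    rw [h2, h1, htr, hsum]
  -- split off α
  set R' := R.erase ((α : ℝ) : ℂ) with hR'
  have hRsplit : R = ((α : ℝ) : ℂ) ::ₘ R' := (Multiset.cons_erase hαR).symm
  have hsplit : ((m : ℤ) : ℂ) = ((α : ℝ) : ℂ) ^ n + (R'.map (· ^ n)).sum := by
    rw [hcast]
    conv_lhs => rw [hRsplit]
    rw [Multiset.map_cons, Multiset.sum_cons]
  have hR'mem : ∀ z ∈ R', z ≠ ((α : ℝ) : ℂ) ∧ z ∈ R := by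
    intro z hz
    exact hnodup.mem_erase_iff.1 hz
  have hcard' : Multiset.card R' = d - 1 := by
    rw [hR', Multiset.card_erase_of_mem hαR, hcard]
    exact Nat.pred_eq_sub_one
  -- the bound
  set b : ℝ := ‖α₂‖ with hb
  have hb1 : b < 1 := hsmall α₂ hα₂ hα₂ne
  have hb0 : 0 ≤ b := norm_nonneg _
  have habs : ‖(R'.map (· ^ n)).sum‖ ≤ ((d : ℝ) - 1) * b ^ n := by
    refine le_trans (abs_multiset_sum _) ?_
    rw [Multiset.map_map]
    have hle : (R'.map (fun z => ‖z ^ n‖)).sum ≤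
        (R'.map (fun _ => b ^ n)).sum := by
      refine Multiset.sum_map_le_sum_map _ _ ?_
      intro z hz
      obtain ⟨hzne, hzR⟩ := hR'mem z hz
      rw [norm_pow]
      exact pow_le_pow_left₀ (norm_nonneg z) (hmax z hzR hzne) n
    refine le_trans (le_trans (le_of_eq ?_) hle) ?_
    · rfl
    · rw [Multiset.map_const', Multiset.sum_replicate, hcard', nsmul_eq_mul]
      have : ((d - 1 : ℕ) : ℝ) = (d : ℝ) - 1 := by
        have : (1 : ℕ) ≤ d := le_trans one_le_two hd2
        push_cast [this]; ring
      rw [this]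
  have hd1pos : (0 : ℝ) < (d : ℝ) - 1 := by
    have : (2 : ℝ) ≤ (d : ℝ) := by exact_mod_cast hd2
    linarith
  have hbound : ((d : ℝ) - 1) * b ^ n < 1 / 2 := by
    rcases eq_or_lt_of_le hb0 with hbz | hbpos
    · -- b = 0
      have hbz' : b = 0 := hbz.symm
      have hn0 : 0 < n := by
        rw [hbz', Real.logb, Real.log_zero, div_zero] at hn
        exact_mod_cast hn
      rw [hbz', zero_pow hn0.ne', mul_zero]
      norm_num
    · have hx : (0 : ℝ) < 1 / (2 * ((d : ℝ) - 1)) := by positivity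
      have hlogb : Real.log b < 0 := Real.log_neg hbpos hb1
      rw [Real.logb, div_lt_iff_of_neg hlogb] at hn
      have hlog : Real.log (b ^ n) < Real.log (1 / (2 * ((d : ℝ) - 1))) := by
        rw [Real.log_pow]; exact hn
      have hpow : b ^ n < 1 / (2 * ((d : ℝ) - 1)) :=
        (Real.log_lt_log_iff (by positivity) hx).1 hlog
      calc ((d : ℝ) - 1) * b ^ n < ((d : ℝ) - 1) * (1 / (2 * ((d : ℝ) - 1))) := by
            exact mul_lt_mul_of_pos_left hpow hd1pos
        _ = 1 / 2 := by field_simp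
  -- conclude
  have hreal : |α ^ n - (m : ℝ)| < 1 / 2 := by
    have hdiff : (((α ^ n - (m : ℝ)) : ℝ) : ℂ) = -(R'.map (· ^ n)).sum := by
      push_cast
      linear_combination -hsplit
    have : |α ^ n - (m : ℝ)| = ‖(R'.map (· ^ n)).sum‖ := by
      rw [← Real.norm_eq_abs, ← Complex.norm_real, hdiff, norm_neg]
    rw [this]
    exact lt_of_le_of_lt habs hbound
  exact (round_eq_of_abs_sub_lt hreal).symm
end

section
/- Let α be a Pisot number with degree d ≥ 2 and second-largest conjugate modulus θ = |α₂| < 1. Then the sequence of nearest integers a_n = [αⁿ] satisfies the linear recurrence given by the minimal polynomial of α for all sufficiently large n: if f(x) = x^d + c_{d-1}x^{d-1} + ⋯ + c_0 is the minimal polynomial, then a_{n+d} + c_{d-1}a_{n+d-1} + ⋯ + c_0 a_n = 0 for all n > log_θ(1/(2(d-1))). -/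
open IntermediateField

private lemma stmt_17_round_eq {x : ℝ} {m : ℤ} (h : |x - (m:ℝ)| < 1/2) : round x = m := by
  have h1 := abs_lt.mp h
  rw [round_eq, Int.floor_eq_iff]
  constructor
  · push_cast; linarith [h1.1]
  · push_cast; linarith [h1.2]

set_option maxHeartbeats 1000000 in
/-- For a Pisot number `α` with minimal polynomial `f` of degree `d ≥ 2` and
second-largest conjugate modulus `θ < 1`, the nearest integers `a_n = [αⁿ]` satisfy the
linear recurrence given by `f` for all `n > log_θ(1/(2(d-1)))`:
`a_{n+d} + c_{d-1}a_{n+d-1} + ⋯ + c_0 a_n = 0`. -/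
theorem stmt_17 (α : ℝ) (hint : IsIntegral ℤ α) (hα : 1 < α)
    (f : Polynomial ℤ) (hf : f = minpoly ℤ α)
    (d : ℕ) (hd : d = f.natDegree) (hd2 : 2 ≤ d)
    (θ : ℝ)
    (hθ : ∃ α₂ ∈ (f.map (Int.castRingHom ℂ)).roots, α₂ ≠ (α : ℂ) ∧ θ = ‖α₂‖ ∧
      ∀ z ∈ (f.map (Int.castRingHom ℂ)).roots, z ≠ (α : ℂ) → ‖z‖ ≤ θ)
    (hθ1 : θ < 1)
    (a : ℕ → ℤ) (ha : ∀ j, a j = round (α ^ j))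
    (n : ℕ) (hn : Real.logb θ (1 / (2 * ((d : ℝ) - 1))) < n) :
    ∑ i ∈ Finset.range (d + 1), f.coeff i * a (n + i) = 0 := by
  classical
  obtain ⟨α₂, hα₂mem, hα₂ne, hθdef, hθmax⟩ := hθ
  have hα0 : (0:ℝ) < α := lt_trans zero_lt_one hα
  have hfmonic : f.Monic := hf ▸ minpoly.monic hint
  have hαQ : IsIntegral ℚ α := IsIntegral.tower_top hint
  haveI : FiniteDimensional ℚ ℚ⟮α⟯ := IntermediateField.adjoin.finiteDimensional hαQ
  set g : ℚ⟮α⟯ := IntermediateField.AdjoinSimple.gen ℚ α with hgdef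
  set fC := f.map (Int.castRingHom ℂ) with hfC
  have hfC_monic : fC.Monic := hfmonic.map _
  have hfCdeg : fC.natDegree = d := by rw [hfC, hfmonic.natDegree_map]; exact hd.symm
  have hgα : algebraMap ℚ⟮α⟯ ℝ g = α := IntermediateField.AdjoinSimple.algebraMap_gen ℚ α
  have haevalg : Polynomial.aeval g f = 0 := by
    have h1 : Polynomial.aeval α f = 0 := by rw [hf]; exact minpoly.aeval ℤ α
    rw [← hgα, Polynomial.aeval_algebraMap_apply] at h1
    exact (algebraMap ℚ⟮α⟯ ℝ).injective (by simpa using h1)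
  have hroot : ∀ σ : ℚ⟮α⟯ →ₐ[ℚ] ℂ, fC.eval (σ g) = 0 := by
    intro σ
    have h2 := Polynomial.aeval_algHom_apply (σ.toRingHom.toIntAlgHom) g f
    rw [haevalg, map_zero] at h2
    rw [hfC, Polynomial.eval_map, ← algebraMap_int_eq, ← Polynomial.aeval_def]
    simpa using h2
  have hmem : ∀ σ : ℚ⟮α⟯ →ₐ[ℚ] ℂ, σ g ∈ fC.roots := fun σ =>
    Polynomial.mem_roots'.mpr ⟨hfC_monic.ne_zero, hroot σ⟩
  -- the real embedding
  set σ₀ : ℚ⟮α⟯ →ₐ[ℚ] ℂ := (Complex.ofRealAm.restrictScalars ℚ).comp ℚ⟮α⟯.val with hσ₀def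
  have hσ₀ : σ₀ g = (α : ℂ) := by
    rw [hσ₀def, hgdef]; rfl
  -- injectivity of evaluation at g
  have hinj : Function.Injective (fun σ : ℚ⟮α⟯ →ₐ[ℚ] ℂ => σ g) := by
    have he : ∀ σ : ℚ⟮α⟯ →ₐ[ℚ] ℂ,
        σ g = ((IntermediateField.algHomAdjoinIntegralEquiv ℚ (K := ℂ) hαQ σ : ℂ)) := by
      intro σ
      conv_lhs =>
        rw [← (IntermediateField.algHomAdjoinIntegralEquiv ℚ (K := ℂ) hαQ).symm_apply_apply σ]
      exact IntermediateField.algHomAdjoinIntegralEquiv_symm_apply_gen ℚ hαQ _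
    intro σ τ h
    apply (IntermediateField.algHomAdjoinIntegralEquiv ℚ (K := ℂ) hαQ).injective
    apply Subtype.ext
    rw [← he σ, ← he τ]
    exact h
  -- trace values are integers
  have hZ : ∀ j : ℕ, ∃ m : ℤ, algebraMap ℤ ℚ m = Algebra.trace ℚ ℚ⟮α⟯ (g ^ j) := by
    intro j
    refine IsIntegrallyClosed.isIntegral_iff.mp ?_
    refine Algebra.isIntegral_trace (R := ℤ) ?_
    refine IsIntegral.pow ?_ j
    rw [← isIntegral_algebraMap_iff (algebraMap ℚ⟮α⟯ ℝ).injective, hgα]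
    exact hint
  choose b hb using hZ
  have htr : ∀ j : ℕ, ((b j : ℤ) : ℂ) = ∑ σ : ℚ⟮α⟯ →ₐ[ℚ] ℂ, (σ g) ^ j := by
    intro j
    have h3 := trace_eq_sum_embeddings (E := ℂ) (K := ℚ) (L := ℚ⟮α⟯) (x := g ^ j)
    rw [← hb j] at h3
    simpa [map_pow] using h3
  -- cardinality
  have hcard : Fintype.card (ℚ⟮α⟯ →ₐ[ℚ] ℂ) = d := by
    rw [AlgHom.card, IntermediateField.adjoin.finrank hαQ,
      minpoly.isIntegrallyClosed_eq_field_fractions' ℚ hint, ← hf,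
      hfmonic.natDegree_map, hd]
  -- recurrence over ℂ
  have hrec : ∑ i ∈ Finset.range (d+1), (f.coeff i : ℂ) * ((b (n+i) : ℤ) : ℂ) = 0 := by
    calc ∑ i ∈ Finset.range (d+1), (f.coeff i : ℂ) * ((b (n+i) : ℤ) : ℂ)
        = ∑ i ∈ Finset.range (d+1), ∑ σ : ℚ⟮α⟯ →ₐ[ℚ] ℂ, (f.coeff i : ℂ) * (σ g) ^ (n+i) := by
          refine Finset.sum_congr rfl fun i _ => ?_
          rw [htr (n+i), Finset.mul_sum]
      _ = ∑ σ : ℚ⟮α⟯ →ₐ[ℚ] ℂ, ∑ i ∈ Finset.range (d+1), (f.coeff i : ℂ) * (σ g) ^ (n+i) :=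
          Finset.sum_comm
      _ = ∑ σ : ℚ⟮α⟯ →ₐ[ℚ] ℂ, (σ g) ^ n * fC.eval (σ g) := by
          refine Finset.sum_congr rfl fun σ _ => ?_
          rw [Polynomial.eval_eq_sum_range, hfCdeg, Finset.mul_sum]
          refine Finset.sum_congr rfl fun i _ => ?_
          rw [hfC, Polynomial.coeff_map, pow_add, eq_intCast]
          ring
      _ = 0 := by
          refine Finset.sum_eq_zero fun σ _ => ?_
          rw [hroot σ, mul_zero]
  -- positivity of θ
  have hθ0 : 0 < θ := by
    rw [hθdef]
    refine norm_pos_iff.mpr ?_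
    intro h0'
    have hroot0 : fC.IsRoot 0 := by
      rw [← h0']; exact (Polynomial.mem_roots'.mp hα₂mem).2
    have hc0 : f.coeff 0 = 0 := by
      have h4 : fC.coeff 0 = 0 := by
        rw [Polynomial.coeff_zero_eq_eval_zero]; exact hroot0
      rw [hfC, Polynomial.coeff_map, eq_intCast] at h4
      exact_mod_cast h4
    have hXdvd : Polynomial.X ∣ f := Polynomial.X_dvd_iff.mpr hc0
    have hirr : Irreducible f := hf ▸ minpoly.irreducible hint
    obtain ⟨q, hq⟩ := hXdvd
    rcases hirr.isUnit_or_isUnit hq with h | h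
    · exact Polynomial.not_isUnit_X h
    · have hq0 : q ≠ 0 := fun h0 => by simp [h0] at hq; exact hfmonic.ne_zero hq
      have : f.natDegree = 1 := by
        rw [hq, Polynomial.natDegree_mul Polynomial.X_ne_zero hq0,
          Polynomial.natDegree_X, Polynomial.natDegree_eq_zero_of_isUnit h]
      omega
  -- θ ^ n < 1/(2(d-1))
  have hd1R : (1:ℝ) ≤ (d:ℝ) - 1 := by
    have : (2:ℝ) ≤ (d:ℝ) := by exact_mod_cast hd2
    linarith
  have hθn : θ ^ n < 1 / (2 * ((d:ℝ) - 1)) := by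
    have hlogθ : Real.log θ < 0 := Real.log_neg hθ0 hθ1
    rw [Real.logb, div_lt_iff_of_neg hlogθ] at hn
    have h5 : Real.log (θ ^ n) < Real.log (1 / (2 * ((d:ℝ) - 1))) := by
      rw [Real.log_pow]; push_cast; nlinarith
    have hpos : (0:ℝ) < θ ^ n := pow_pos hθ0 n
    have hcpos : (0:ℝ) < 1 / (2 * ((d:ℝ) - 1)) := by positivity
    exact (Real.log_lt_log_iff hpos hcpos).mp h5
  -- match a and b
  have hab : ∀ j, n ≤ j → a j = b j := by
    intro j hj
    rw [ha j]
    apply stmt_17_round_eq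
    have hsplit : ((b j : ℤ) : ℂ) - (α:ℂ) ^ j = ∑ σ ∈ Finset.univ.erase σ₀, (σ g) ^ j := by
      rw [htr j, ← Finset.add_sum_erase _ _ (Finset.mem_univ σ₀), hσ₀]
      ring
    have hcard' : (Finset.univ.erase σ₀).card = d - 1 := by
      rw [Finset.card_erase_of_mem (Finset.mem_univ _), Finset.card_univ, hcard]
    have hbound : ‖((b j : ℤ) : ℂ) - (α:ℂ) ^ j‖ ≤ ((d:ℝ) - 1) * θ ^ j := by
      rw [hsplit]
      refine le_trans (norm_sum_le _ _) ?_
      have hle : ∀ σ ∈ Finset.univ.erase σ₀, ‖(σ g) ^ j‖ ≤ θ ^ j := by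
        intro σ hσ
        rw [norm_pow]
        refine pow_le_pow_left₀ (norm_nonneg _) ?_ j
        refine hθmax _ (hmem σ) ?_
        intro hcontra
        exact (Finset.ne_of_mem_erase hσ) (hinj (hcontra.trans hσ₀.symm))
      refine le_trans (Finset.sum_le_sum hle) ?_
      rw [Finset.sum_const, hcard', nsmul_eq_mul]
      have : ((d - 1 : ℕ) : ℝ) = (d:ℝ) - 1 := by
        have : 1 ≤ d := by omega
        push_cast [Nat.cast_sub this]; ring
      rw [this]
    have hreal : |((b j : ℤ) : ℝ) - α ^ j| ≤ ((d:ℝ) - 1) * θ ^ j := by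
      have hcast2 : (((b j : ℝ) - α ^ j : ℝ) : ℂ) = ((b j : ℤ) : ℂ) - (α:ℂ) ^ j := by
        push_cast; ring
      rw [← Real.norm_eq_abs, ← Complex.norm_real, hcast2]
      exact hbound
    have hθj : θ ^ j ≤ θ ^ n := pow_le_pow_of_le_one hθ0.le hθ1.le hj
    have hfin : ((d:ℝ) - 1) * θ ^ j < 1/2 := by
      have h6 : ((d:ℝ) - 1) * θ ^ j ≤ ((d:ℝ) - 1) * θ ^ n := by nlinarith
      have h7 : ((d:ℝ) - 1) * θ ^ n < ((d:ℝ) - 1) * (1 / (2 * ((d:ℝ) - 1))) := by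
        refine mul_lt_mul_of_pos_left hθn (by linarith)
      have h8 : ((d:ℝ) - 1) * (1 / (2 * ((d:ℝ) - 1))) = 1/2 := by
        field_simp
      linarith
    rw [abs_sub_comm]
    linarith [hreal]
  -- conclude
  have hfinal : ∑ i ∈ Finset.range (d + 1), f.coeff i * a (n + i)
      = ∑ i ∈ Finset.range (d + 1), f.coeff i * b (n + i) := by
    refine Finset.sum_congr rfl fun i _ => ?_
    rw [hab (n+i) (Nat.le_add_right n i)]
  rw [hfinal]
  have hcast : ((∑ i ∈ Finset.range (d + 1), f.coeff i * b (n + i) : ℤ) : ℂ) = 0 := by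
    push_cast
    exact hrec
  exact_mod_cast hcast
end
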